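/- Let K = k((t)) be the field of formal Laurent series over a field k, with t-adic valuation ν. The tame symbol λ(f,g) = (−1)^{ν(f)ν(g)} · (f^{ν(g)}/g^{ν(f)}) mod t, a map K^* × K^* → k^*, is bimultiplicative and satisfies the Steinberg relation λ(f, 1−f) = 1 for f ≠ 0,1. -/

import Mathlib

open HahnSeries

section Aux

variable {k : Type*} [Field k]

lemma lc_eq {x : LaurentSeries k} (hx : x ≠ 0) :
    x.leadingCoeff = x.coeff x.order := by
  exact leadingCoeff_eq

lemma lc_mul {x y : LaurentSeries k} (hx : x ≠ 0) (hy : y ≠ 0) :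
    (x * y).leadingCoeff = x.leadingCoeff * y.leadingCoeff := by
  rw [lc_eq (mul_ne_zero hx hy), order_mul hx hy, coeff_mul_order_add_order]

lemma lc_inv {x : LaurentSeries k} (hx : x ≠ 0) :
    x⁻¹.leadingCoeff = x.leadingCoeff⁻¹ := by
  have h : x * x⁻¹ = 1 := mul_inv_cancel₀ hx
  have h2 := lc_mul hx (inv_ne_zero hx)
  rw [h, leadingCoeff_one] at h2
  exact (inv_eq_of_mul_eq_one_right h2.symm).symm

lemma order_inv {x : LaurentSeries k} (hx : x ≠ 0) :
    x⁻¹.order = -x.order := by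
  have h : x * x⁻¹ = 1 := mul_inv_cancel₀ hx
  have h2 := order_mul hx (inv_ne_zero hx)
  rw [h, order_one] at h2
  omega

lemma lc_pow {x : LaurentSeries k} (hx : x ≠ 0) (n : ℕ) :
    (x ^ n).leadingCoeff = x.leadingCoeff ^ n := by
  induction n with
  | zero => simp
  | succ m ih => rw [pow_succ, lc_mul (pow_ne_zero m hx) hx, ih, pow_succ]

lemma lc_zpow {x : LaurentSeries k} (hx : x ≠ 0) (n : ℤ) :
    (x ^ n).leadingCoeff = x.leadingCoeff ^ n := by
  cases n with
  | ofNat m => simpa using lc_pow hx m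
  | negSucc m =>
      rw [zpow_negSucc, zpow_negSucc, lc_inv (pow_ne_zero _ hx), lc_pow hx]

lemma order_zpow {x : LaurentSeries k} (hx : x ≠ 0) (n : ℤ) :
    (x ^ n).order = n * x.order := by
  cases n with
  | ofNat m => rw [Int.ofNat_eq_coe, zpow_natCast, order_pow]; simp
  | negSucc m =>
      rw [zpow_negSucc, order_inv (pow_ne_zero _ hx), order_pow]
      simp [Int.negSucc_eq]; ring

lemma neg_one_ne_zero' : (-1 : LaurentSeries k) ≠ 0 := by
  intro h
  exact one_ne_zero (α := LaurentSeries k) (by linear_combination -h)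

lemma neg_one_order : (-1 : LaurentSeries k).order = 0 := by
  rw [show (-1 : LaurentSeries k) = -(1 : LaurentSeries k) by ring, order_neg, order_one]

lemma neg_one_lc : (-1 : LaurentSeries k).leadingCoeff = -1 := by
  rw [lc_eq neg_one_ne_zero', neg_one_order,
    show (-1 : LaurentSeries k) = -(1 : LaurentSeries k) by ring, HahnSeries.coeff_neg]
  simp

lemma order_eq_of_coeff {x : LaurentSeries k} {n : ℤ} (hn : x.coeff n ≠ 0)
    (h : ∀ i < n, x.coeff i = 0) : x.order = n := by
  refine le_antisymm (order_le_of_coeff_ne_zero hn) ?_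
  by_contra h'
  exact coeff_order_eq_zero.not.mpr (ne_zero_of_coeff_ne_zero hn) (h _ (lt_of_not_ge h'))

end Aux

/-- The tame symbol `λ(f,g) = (-1)^{ν(f)ν(g)} (f^{ν(g)}/g^{ν(f)}) mod t` on the field
of formal Laurent series `k((t))`, with values in `k` (given by the coefficient at 0
of a valuation-zero Laurent series). -/
noncomputable def tameSymbol {k : Type*} [Field k] (f g : LaurentSeries k) : k :=
  (((-1 : LaurentSeries k) ^ (f.order * g.order)) * f ^ (g.order) *
      g ^ (-(f.order))).coeff 0

lemma tameSymbol_eq {k : Type*} [Field k] {f g : LaurentSeries k} (hf : f ≠ 0) (hg : g ≠ 0) :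
    tameSymbol f g = (-1 : k) ^ (f.order * g.order) * f.leadingCoeff ^ g.order *
      g.leadingCoeff ^ (-f.order) := by
  set P : LaurentSeries k := (-1 : LaurentSeries k) ^ (f.order * g.order) * f ^ g.order *
      g ^ (-f.order) with hP
  have hP1 : (-1 : LaurentSeries k) ^ (f.order * g.order) ≠ 0 := zpow_ne_zero _ neg_one_ne_zero'
  have hP2 : f ^ g.order ≠ 0 := zpow_ne_zero _ hf
  have hP3 : g ^ (-f.order) ≠ 0 := zpow_ne_zero _ hg
  have hPne : P ≠ 0 := mul_ne_zero (mul_ne_zero hP1 hP2) hP3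
  have hord : P.order = 0 := by
    rw [hP, order_mul (mul_ne_zero hP1 hP2) hP3, order_mul hP1 hP2,
      order_zpow neg_one_ne_zero', order_zpow hf, order_zpow hg, neg_one_order]
    ring
  have hlc : P.leadingCoeff =
      (-1 : k) ^ (f.order * g.order) * f.leadingCoeff ^ g.order *
        g.leadingCoeff ^ (-f.order) := by
    rw [hP, lc_mul (mul_ne_zero hP1 hP2) hP3, lc_mul hP1 hP2,
      lc_zpow neg_one_ne_zero', lc_zpow hf, lc_zpow hg, neg_one_lc]
  rw [tameSymbol, ← hP, ← hord, ← lc_eq hPne, hlc]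

/-- The tame symbol on `k((t))` is bimultiplicative, takes values in `k^*`, and
satisfies the Steinberg relation `λ(f, 1-f) = 1`. -/
theorem tameSymbol_bimultiplicative_steinberg {k : Type*} [Field k] :
    (∀ f f' g : LaurentSeries k, f ≠ 0 → f' ≠ 0 → g ≠ 0 →
        tameSymbol (f * f') g = tameSymbol f g * tameSymbol f' g) ∧
    (∀ f g g' : LaurentSeries k, f ≠ 0 → g ≠ 0 → g' ≠ 0 →
        tameSymbol f (g * g') = tameSymbol f g * tameSymbol f g') ∧
    (∀ f g : LaurentSeries k, f ≠ 0 → g ≠ 0 → tameSymbol f g ≠ 0) ∧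
    (∀ f : LaurentSeries k, f ≠ 0 → f ≠ 1 → tameSymbol f (1 - f) = 1) := by
  have hne1 : (-1 : k) ≠ 0 := by norm_num
  refine ⟨?_, ?_, ?_, ?_⟩
  · intro f f' g hf hf' hg
    have hv : g.leadingCoeff ≠ 0 := leadingCoeff_ne_zero.mpr hg
    rw [tameSymbol_eq (mul_ne_zero hf hf') hg, tameSymbol_eq hf hg, tameSymbol_eq hf' hg,
      order_mul hf hf', lc_mul hf hf', add_mul, zpow_add₀ hne1, mul_zpow, neg_add,
      zpow_add₀ hv]
    ring
  · intro f g g' hf hg hg'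
    have hu : f.leadingCoeff ≠ 0 := leadingCoeff_ne_zero.mpr hf
    rw [tameSymbol_eq hf (mul_ne_zero hg hg'), tameSymbol_eq hf hg, tameSymbol_eq hf hg',
      order_mul hg hg', lc_mul hg hg', mul_add, zpow_add₀ hne1, mul_zpow,
      zpow_add₀ hu]
    ring
  · intro f g hf hg
    rw [tameSymbol_eq hf hg]
    exact mul_ne_zero (mul_ne_zero (zpow_ne_zero _ hne1)
      (zpow_ne_zero _ (leadingCoeff_ne_zero.mpr hf)))
      (zpow_ne_zero _ (leadingCoeff_ne_zero.mpr hg))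
  · intro f hf0 hf1
    have hg : (1 : LaurentSeries k) - f ≠ 0 := sub_ne_zero.mpr (Ne.symm hf1)
    have hu : f.leadingCoeff ≠ 0 := leadingCoeff_ne_zero.mpr hf0
    rw [tameSymbol_eq hf0 hg]
    rcases lt_trichotomy f.order 0 with hm | hm | hm
    · -- ν(f) < 0 : ν(1-f) = ν(f), leading coeff is -u
      have hcm : ((1 : LaurentSeries k) - f).coeff f.order = -f.leadingCoeff := by
        rw [HahnSeries.coeff_sub, HahnSeries.coeff_one, if_neg (by omega), lc_eq hf0]
        ring
      have horder : ((1 : LaurentSeries k) - f).order = f.order := by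
        refine order_eq_of_coeff (by rw [hcm]; exact neg_ne_zero.mpr hu) (fun i hi => ?_)
        rw [HahnSeries.coeff_sub, HahnSeries.coeff_one, if_neg (by omega),
          coeff_eq_zero_of_lt_order hi]
        ring
      have hlcg : ((1 : LaurentSeries k) - f).leadingCoeff = -f.leadingCoeff := by
        rw [lc_eq hg, horder, hcm]
      rw [horder, hlcg, show -f.leadingCoeff = -1 * f.leadingCoeff by ring, mul_zpow]
      have h1 : f.leadingCoeff ^ f.order * f.leadingCoeff ^ (-f.order) = 1 := by
        rw [← zpow_add₀ hu]; simp
      have heven : Even (f.order * f.order + -f.order) := by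
        have h := Int.even_mul_succ_self (f.order - 1)
        have he : (f.order - 1) * (f.order - 1 + 1) = f.order * f.order + -f.order := by ring
        rwa [he] at h
      have h2 : (-1 : k) ^ (f.order * f.order) * (-1 : k) ^ (-f.order) = 1 := by
        rw [← zpow_add₀ hne1]; exact heven.neg_one_zpow
      linear_combination (f.leadingCoeff ^ f.order * f.leadingCoeff ^ (-f.order)) * h2 + h1
    · -- ν(f) = 0
      rw [hm]
      simp only [zero_mul, zpow_zero, neg_zero, one_mul, mul_one]
      set n := ((1 : LaurentSeries k) - f).order with hn
      have hnn : 0 ≤ n := by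
        by_contra h'
        push_neg at h'
        have hc := coeff_order_eq_zero.not.mpr hg
        rw [← hn, HahnSeries.coeff_sub, HahnSeries.coeff_one, if_neg (by omega),
          coeff_eq_zero_of_lt_order (by omega : n < f.order)] at hc
        simp at hc
      rcases eq_or_lt_of_le hnn with h0 | h0
      · rw [← h0, zpow_zero]
      · have hc0 : ((1 : LaurentSeries k) - f).coeff 0 = 0 :=
          coeff_eq_zero_of_lt_order (by rw [← hn]; exact h0)
        rw [HahnSeries.coeff_sub, HahnSeries.coeff_one, if_pos rfl] at hc0
        have hu1 : f.leadingCoeff = 1 := by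
          rw [lc_eq hf0, hm]
          linear_combination -hc0
        rw [hu1, one_zpow]
    · -- ν(f) > 0 : ν(1-f) = 0, leading coeff is 1
      have hc0 : ((1 : LaurentSeries k) - f).coeff 0 = 1 := by
        rw [HahnSeries.coeff_sub, HahnSeries.coeff_one, if_pos rfl,
          coeff_eq_zero_of_lt_order (by omega : (0 : ℤ) < f.order)]
        ring
      have horder : ((1 : LaurentSeries k) - f).order = 0 := by
        refine order_eq_of_coeff (by rw [hc0]; exact one_ne_zero) (fun i hi => ?_)
        rw [HahnSeries.coeff_sub, HahnSeries.coeff_one, if_neg (by omega),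
          coeff_eq_zero_of_lt_order (by omega : i < f.order)]
        ring
      have hlcg : ((1 : LaurentSeries k) - f).leadingCoeff = 1 := by
        rw [lc_eq hg, horder, hc0]
      rw [horder, hlcg]
      simp
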